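/- For the controlled-NOT Hamiltonian H = σ_1 ⊗ (1−σ_3)/2 + 1 ⊗ (1+σ_3)/2 on ℂ²⊗ℂ² and initial correlation ρ_COR = Σ_{ij} γ_{ij} σ_i ⊗ σ_j, the inhomogeneous part δρ(t) = tr_B{e^{−iHt} ρ_COR e^{iHt}} equals 2(γ_{23} sin²t + γ_{33} sin t cos t) σ_2 + 2(γ_{33} sin²t − γ_{23} sin t cos t) σ_3; in particular δρ(t) = 0 for all t if and only if γ_{23} = γ_{33} = 0. -/

import Mathlib

set_option maxHeartbeats 2000000

open Matrix Kronecker Complex BigOperators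

/-- Partial trace over the second (B) factor. -/
noncomputable def ptraceB {m n : Type*} [Fintype n] (C : Matrix (m × n) (m × n) ℂ) :
    Matrix m m ℂ :=
  fun i j => ∑ k, C (i, k) (j, k)

/-- Partial trace over the first (A) factor. -/
noncomputable def ptraceA {m n : Type*} [Fintype m] (C : Matrix (m × n) (m × n) ℂ) :
    Matrix n n ℂ :=
  fun i j => ∑ k, C (k, i) (k, j)

/-- The standard Pauli matrices. -/
noncomputable def pauli : Fin 3 → Matrix (Fin 2) (Fin 2) ℂ :=
  ![!![0, 1; 1, 0], !![0, -I; I, 0], !![1, 0; 0, -1]]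

/-- The controlled-NOT Hamiltonian. -/
noncomputable def cnotH : Matrix (Fin 2 × Fin 2) (Fin 2 × Fin 2) ℂ :=
  pauli 0 ⊗ₖ (((1 : ℂ) / 2) • ((1 : Matrix (Fin 2) (Fin 2) ℂ) - pauli 2)) +
    (1 : Matrix (Fin 2) (Fin 2) ℂ) ⊗ₖ (((1 : ℂ) / 2) • ((1 : Matrix (Fin 2) (Fin 2) ℂ) + pauli 2))

section AbstractExp

open NormedSpace

variable {𝔸 : Type*} [NormedRing 𝔸] [NormedAlgebra ℂ 𝔸] [CompleteSpace 𝔸]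

omit [NormedAlgebra ℂ 𝔸] [CompleteSpace 𝔸] in
lemma aux_pow_idem {P : 𝔸} (hP : P * P = P) : ∀ n : ℕ, P ^ (n + 1) = P := by
  intro n
  induction n with
  | zero => simp
  | succ k ih => rw [pow_succ, ih, hP]

lemma aux_exp_idem (w : ℂ) (P : 𝔸) (hP : P * P = P) :
    exp (w • P) = 1 + (Complex.exp w - 1) • P := by
  have hsum : Summable fun n : ℕ => ((n.factorial :ℂ))⁻¹ • (w • P) ^ n := expSeries_summable' (w • P)
  have hs : Summable fun n : ℕ => ((n.factorial :ℂ))⁻¹ • w ^ n := expSeries_summable' w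
  have hs1 : Summable fun n : ℕ => (((n+1).factorial :ℂ))⁻¹ • w ^ (n+1) :=
    (summable_nat_add_iff 1).2 hs
  have hexp : Complex.exp w = ∑' n : ℕ, ((n.factorial :ℂ))⁻¹ • w ^ n := by
    rw [Complex.exp_eq_exp_ℂ, exp_eq_tsum (𝕂 := ℂ)]
  have key : ∑' n : ℕ, (((n+1).factorial :ℂ))⁻¹ • w ^ (n+1) = Complex.exp w - 1 := by
    rw [hexp, Summable.tsum_eq_zero_add hs]
    simp
  calc exp (w • P) = ∑' n : ℕ, ((n.factorial :ℂ))⁻¹ • (w • P) ^ n := by rw [exp_eq_tsum (𝕂 := ℂ)]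
    _ = (1:𝔸) + ∑' n : ℕ, (((n+1).factorial :ℂ))⁻¹ • (w • P) ^ (n+1) := by
        rw [Summable.tsum_eq_zero_add hsum]; simp
    _ = 1 + ∑' n : ℕ, ((((n+1).factorial :ℂ))⁻¹ • w ^ (n+1)) • P := by
        congr 1
        refine tsum_congr fun n => ?_
        rw [smul_pow, aux_pow_idem hP, smul_smul, smul_eq_mul]
    _ = 1 + (∑' n : ℕ, (((n+1).factorial :ℂ))⁻¹ • w ^ (n+1)) • P := by
        rw [Summable.tsum_smul_const hs1]
    _ = 1 + (Complex.exp w - 1) • P := by rw [key]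

lemma aux_exp_sq_one (z : ℂ) (A : 𝔸) (hA : A * A = 1) :
    exp (z • A) = ((Complex.exp z + Complex.exp (-z)) / 2) • 1 +
      ((Complex.exp z - Complex.exp (-z)) / 2) • A := by
  set P : 𝔸 := (2⁻¹ : ℂ) • (1 + A) with hPdef
  have hP : P * P = P := by
    simp only [hPdef, smul_mul_smul_comm, mul_add, add_mul, one_mul, mul_one, hA]
    module
  have hsplit : z • A = (-z) • (1:𝔸) + (2*z) • P := by
    simp only [hPdef, smul_smul, smul_add]
    module
  have hcomm : Commute ((-z) • (1:𝔸)) ((2*z) • P) := by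
    apply Commute.smul_left; apply Commute.smul_right; exact (Commute.one_left P)
  rw [hsplit, NormedSpace.exp_add_of_commute_of_mem_ball (𝕂 := ℂ) hcomm ((NormedSpace.expSeries_radius_eq_top ℂ 𝔸).symm ▸ edist_lt_top _ _) ((NormedSpace.expSeries_radius_eq_top ℂ 𝔸).symm ▸ edist_lt_top _ _), aux_exp_idem (-z) 1 (by simp), aux_exp_idem (2*z) P hP]
  simp only [hPdef, smul_add, smul_smul]
  have h1 : Complex.exp (-z) * Complex.exp (2*z) = Complex.exp z := by
    rw [← Complex.exp_add]; ring_nf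
  simp only [mul_add, add_mul, one_mul, mul_one, smul_mul_smul_comm, smul_smul,
    Algebra.mul_smul_comm, Algebra.smul_mul_assoc]
  match_scalars <;> linear_combination (h1/2)

end AbstractExp

lemma matrix_exp_sq_one (z : ℂ) (A : Matrix (Fin 2 × Fin 2) (Fin 2 × Fin 2) ℂ) (hA : A * A = 1) :
    NormedSpace.exp (z • A) = ((Complex.exp z + Complex.exp (-z)) / 2) • 1 +
      ((Complex.exp z - Complex.exp (-z)) / 2) • A := by
  letI : SeminormedRing (Matrix (Fin 2 × Fin 2) (Fin 2 × Fin 2) ℂ) := Matrix.linftyOpSemiNormedRing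
  letI : NormedRing (Matrix (Fin 2 × Fin 2) (Fin 2 × Fin 2) ℂ) := Matrix.linftyOpNormedRing
  letI : NormedAlgebra ℂ (Matrix (Fin 2 × Fin 2) (Fin 2 × Fin 2) ℂ) := Matrix.linftyOpNormedAlgebra
  exact aux_exp_sq_one z A hA

lemma cnotH_sq : cnotH * cnotH = 1 := by
  ext ⟨i, i'⟩ ⟨j, j'⟩
  simp [cnotH, pauli, Matrix.mul_apply, Fintype.sum_prod_type, Fin.sum_univ_two,
    Matrix.one_apply, Prod.ext_iff]
  fin_cases i <;> fin_cases i' <;> fin_cases j <;> fin_cases j' <;> norm_num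

lemma exp_neg_cnotH (t : ℝ) :
    NormedSpace.exp ((-(I * t)) • cnotH) =
      ((Real.cos t : ℂ)) • (1 : Matrix (Fin 2 × Fin 2) (Fin 2 × Fin 2) ℂ) +
        (-(I * Real.sin t)) • cnotH := by
  rw [matrix_exp_sq_one _ _ cnotH_sq]
  have e1 : Complex.exp (-(I * (t:ℂ))) = Complex.cos t - Complex.sin t * I := by
    rw [show -(I * (t:ℂ)) = (-t) * I by ring, Complex.exp_mul_I, Complex.cos_neg,
      Complex.sin_neg]; ring
  have e2 : Complex.exp (-(-(I * (t:ℂ)))) = Complex.cos t + Complex.sin t * I := by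
    rw [show -(-(I * (t:ℂ))) = (t:ℂ) * I by ring, Complex.exp_mul_I]
  rw [e1, e2, ← Complex.ofReal_cos, ← Complex.ofReal_sin]
  match_scalars <;> ring

lemma exp_pos_cnotH (t : ℝ) :
    NormedSpace.exp ((I * t) • cnotH) =
      ((Real.cos t : ℂ)) • (1 : Matrix (Fin 2 × Fin 2) (Fin 2 × Fin 2) ℂ) +
        (I * Real.sin t) • cnotH := by
  rw [matrix_exp_sq_one _ _ cnotH_sq]
  have e1 : Complex.exp (I * (t:ℂ)) = Complex.cos t + Complex.sin t * I := by
    rw [show I * (t:ℂ) = (t:ℂ) * I by ring, Complex.exp_mul_I]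
  have e2 : Complex.exp (-(I * (t:ℂ))) = Complex.cos t - Complex.sin t * I := by
    rw [show -(I * (t:ℂ)) = (-t) * I by ring, Complex.exp_mul_I, Complex.cos_neg,
      Complex.sin_neg]; ring
  rw [e1, e2, ← Complex.ofReal_cos, ← Complex.ofReal_sin]
  match_scalars <;> ring

lemma cnot_main (γ : Fin 3 → Fin 3 → ℝ) (t : ℝ) :
    ptraceB (NormedSpace.exp ((-(I * t)) • cnotH) *
        (∑ i, ∑ j, (γ i j : ℂ) • (pauli i ⊗ₖ pauli j)) *
        NormedSpace.exp ((I * t) • cnotH)) =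
      ((2 * (γ 1 2 * Real.sin t ^ 2 + γ 2 2 * Real.sin t * Real.cos t) : ℝ) : ℂ) • pauli 1 +
      ((2 * (γ 2 2 * Real.sin t ^ 2 - γ 1 2 * Real.sin t * Real.cos t) : ℝ) : ℂ) • pauli 2 := by
  rw [exp_neg_cnotH, exp_pos_cnotH]
  funext i j
  fin_cases i <;> fin_cases j <;>
    (simp [ptraceB, cnotH, pauli, Matrix.mul_apply, Fintype.sum_prod_type, Fin.sum_univ_two,
      Fin.sum_univ_three, Matrix.one_apply, Matrix.sum_apply, Prod.ext_iff] <;>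
     push_cast <;> ring_nf <;>
     (try simp only [show (I:ℂ)^3 = -I by rw [pow_succ, Complex.I_sq]; ring, Complex.I_sq]) <;>
     (try ring))

theorem cnot_inhomogeneous_part (γ : Fin 3 → Fin 3 → ℝ) :
    (∀ t : ℝ,
      ptraceB (NormedSpace.exp ((-(I * t)) • cnotH) *
          (∑ i, ∑ j, (γ i j : ℂ) • (pauli i ⊗ₖ pauli j)) *
          NormedSpace.exp ((I * t) • cnotH)) =
        ((2 * (γ 1 2 * Real.sin t ^ 2 + γ 2 2 * Real.sin t * Real.cos t) : ℝ) : ℂ) • pauli 1 +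
        ((2 * (γ 2 2 * Real.sin t ^ 2 - γ 1 2 * Real.sin t * Real.cos t) : ℝ) : ℂ) • pauli 2) ∧
    ((∀ t : ℝ,
      ptraceB (NormedSpace.exp ((-(I * t)) • cnotH) *
          (∑ i, ∑ j, (γ i j : ℂ) • (pauli i ⊗ₖ pauli j)) *
          NormedSpace.exp ((I * t) • cnotH)) = 0) ↔ γ 1 2 = 0 ∧ γ 2 2 = 0) := by
  refine ⟨cnot_main γ, ?_, ?_⟩
  · intro h
    have h0 := (cnot_main γ (Real.pi/2)).symm.trans (h (Real.pi/2))
    simp [Real.sin_pi_div_two, Real.cos_pi_div_two] at h0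
    have e00 := congrFun (congrFun h0 0) 0
    have e01 := congrFun (congrFun h0 0) 1
    simp [pauli, Complex.ext_iff] at e00 e01
    constructor <;> linarith [e00, e01]
  · rintro ⟨h1, h2⟩ t
    rw [cnot_main γ t, h1, h2]
    simp
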